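/- arXiv:2605.24482 — 2 statements merged into one kernel-verified Lean document; each statement's English description precedes it below -/
import Mathlib

section
/- Let 1 < p < q < γ be real numbers. Define c_{p,q,γ} = ((γ-q)/(γ-p)) · ((q-p)/(γ-p))^((q-p)/(γ-q)) and c_{e,p,q,γ} = (p(γ-q))/(q(γ-p)) · ((γ(q-p))/(q(γ-p)))^((q-p)/(γ-q)). Then c_{p,q,γ} > c_{e,p,q,γ}. -/
theorem stmt_1 (p q γ : ℝ) (hp : 1 < p) (hpq : p < q) (hqγ : q < γ) :
    (p * (γ - q)) / (q * (γ - p)) *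
      ((γ * (q - p)) / (q * (γ - p))) ^ ((q - p) / (γ - q))
    < (γ - q) / (γ - p) * ((q - p) / (γ - p)) ^ ((q - p) / (γ - q)) := by
  have hp0 : (0:ℝ) < p := lt_trans one_pos hp
  have hq0 : (0:ℝ) < q := lt_trans hp0 hpq
  have hγ0 : (0:ℝ) < γ := lt_trans hq0 hqγ
  have hqp : (0:ℝ) < q - p := by linarith
  have hγq : (0:ℝ) < γ - q := by linarith
  have hγp : (0:ℝ) < γ - p := by linarith
  set e : ℝ := (q - p) / (γ - q) with he
  have he0 : 0 < e := div_pos hqp hγq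
  -- key inequality: (p/q) * (γ/q)^e < 1
  have key : (p / q) * (γ / q) ^ e < 1 := by
    have hγq1 : (1:ℝ) < γ / q := (one_lt_div hq0).mpr hqγ
    have h1 : Real.log (γ / q) < γ / q - 1 :=
      Real.log_lt_sub_one_of_pos (lt_trans one_pos hγq1) (ne_of_gt hγq1)
    have h2 : e * Real.log (γ / q) < (q - p) / q := by
      have : e * Real.log (γ / q) < e * (γ / q - 1) := by
        exact (mul_lt_mul_iff_right₀ he0).mpr h1
      have heq : e * (γ / q - 1) = (q - p) / q := by
        field_simp [he]
        rw [he, div_mul_cancel₀ _ hγq.ne']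
      linarith [heq ▸ this]
    have h3 : (q - p) / q < Real.log (q / p) := by
      have hpq1 : p / q < 1 := (div_lt_one hq0).mpr hpq
      have := Real.log_lt_sub_one_of_pos (div_pos hp0 hq0) (ne_of_lt hpq1)
      have hlog : Real.log (q / p) = - Real.log (p / q) := by
        rw [← Real.log_inv]; congr 1; field_simp
      have : Real.log (p / q) < p / q - 1 := this
      rw [hlog]
      have : (q - p) / q = 1 - p / q := by field_simp
      linarith
    have h4 : e * Real.log (γ / q) < Real.log (q / p) := lt_trans h2 h3
    have h5 : (γ / q) ^ e < q / p := by
      rw [← Real.exp_log (show (0:ℝ) < q / p from div_pos hq0 hp0),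
        Real.rpow_def_of_pos (lt_trans one_pos hγq1)]
      exact Real.exp_lt_exp.mpr (by linarith [h4])
    calc (p / q) * (γ / q) ^ e < (p / q) * (q / p) :=
          (mul_lt_mul_iff_right₀ (div_pos hp0 hq0)).mpr h5
      _ = 1 := by field_simp
  -- rewrite LHS
  have hsplit : ((γ * (q - p)) / (q * (γ - p))) ^ e
      = (γ / q) ^ e * ((q - p) / (γ - p)) ^ e := by
    rw [← Real.mul_rpow (le_of_lt (div_pos hγ0 hq0)) (le_of_lt (div_pos hqp hγp))]
    congr 1
    field_simp
  have hcoef : (p * (γ - q)) / (q * (γ - p)) = (p / q) * ((γ - q) / (γ - p)) := by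
    field_simp
  rw [hsplit, hcoef]
  have hRpos : 0 < (γ - q) / (γ - p) * ((q - p) / (γ - p)) ^ e :=
    mul_pos (div_pos hγq hγp) (Real.rpow_pos_of_pos (div_pos hqp hγp) e)
  calc p / q * ((γ - q) / (γ - p)) * ((γ / q) ^ e * ((q - p) / (γ - p)) ^ e)
      = (p / q * (γ / q) ^ e) * ((γ - q) / (γ - p) * ((q - p) / (γ - p)) ^ e) := by ring
    _ < 1 * ((γ - q) / (γ - p) * ((q - p) / (γ - p)) ^ e) :=
        (mul_lt_mul_iff_left₀ hRpos).mpr key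
    _ = _ := by rw [one_mul]
end

section
/- Let 1 < q < γ, and let 0 < σ_a ≤ â, 0 < σ_b ≤ b̂. For (α,β) ∈ [σ_a, â] × [σ_b, b̂] set j_{α,β}(s) = -(α/q)s^q + (β/γ)s^γ and ρ(α,β) = (α/β)^{1/(γ-q)}. Then for every η > 0 there exists κ_η > 0 such that j_{α,β}(s) - j_{α,β}(ρ(α,β)) ≥ κ_η for all s ≥ 0 and all (α,β) ∈ [σ_a, â] × [σ_b, b̂] with |s - ρ(α,β)| ≥ η. -/
open Real

lemma jmin_aux (q γ α β : ℝ) (hq : 1 < q) (hqγ : q < γ) (hα : 0 < α) (hβ : 0 < β)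
    (s : ℝ) (hs : 0 ≤ s) (hne : s ≠ (α / β) ^ (1 / (γ - q))) :
    -(α / q) * ((α / β) ^ (1 / (γ - q))) ^ q + (β / γ) * ((α / β) ^ (1 / (γ - q))) ^ γ
      < -(α / q) * s ^ q + (β / γ) * s ^ γ := by
  have hq0 : (0:ℝ) < q := by linarith
  have hγ0 : (0:ℝ) < γ := by linarith
  have hγq : (0:ℝ) < γ - q := by linarith
  set f : ℝ → ℝ := fun t => -(α / q) * t ^ q + (β / γ) * t ^ γ with hf
  set r : ℝ := (α / β) ^ (1 / (γ - q)) with hrdef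
  have hab : 0 < α / β := div_pos hα hβ
  have hr : 0 < r := rpow_pos_of_pos hab _
  have hrpow : r ^ (γ - q) = α / β := by
    rw [hrdef, ← Real.rpow_mul hab.le, one_div_mul_cancel hγq.ne', rpow_one]
  have hderiv : ∀ t : ℝ, 0 < t → HasDerivAt f (t ^ (q-1) * (β * t ^ (γ - q) - α)) t := by
    intro t ht
    have h1 : HasDerivAt (fun x : ℝ => x ^ q) (q * t ^ (q - 1)) t :=
      Real.hasDerivAt_rpow_const (Or.inl ht.ne')
    have h2 : HasDerivAt (fun x : ℝ => x ^ γ) (γ * t ^ (γ - 1)) t :=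
      Real.hasDerivAt_rpow_const (Or.inl ht.ne')
    have h3 := (h1.const_mul (-(α / q))).add (h2.const_mul (β / γ))
    refine h3.congr_deriv ?_
    have ht1 : t ^ (q - 1) * t ^ (γ - q) = t ^ (γ - 1) := by
      rw [← Real.rpow_add ht]; ring_nf
    have e1 : α / q * q * t ^ (q - 1) = α * t ^ (q - 1) := by
      rw [div_mul_cancel₀ α hq0.ne']
    have e2 : β / γ * γ * t ^ (γ - 1) = β * t ^ (γ - 1) := by
      rw [div_mul_cancel₀ β hγ0.ne']
    linear_combination -(β * ht1) - e1 + e2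
  have hcontq : Continuous fun x : ℝ => x ^ q := by
    rw [continuous_iff_continuousAt]
    exact fun x => Real.continuousAt_rpow_const x q (Or.inr hq0.le)
  have hcontγ : Continuous fun x : ℝ => x ^ γ := by
    rw [continuous_iff_continuousAt]
    exact fun x => Real.continuousAt_rpow_const x γ (Or.inr hγ0.le)
  have hcont : Continuous f := ((continuous_const.mul hcontq).add (continuous_const.mul hcontγ))
  have hanti : StrictAntiOn f (Set.Icc 0 r) := by
    apply strictAntiOn_of_deriv_neg (convex_Icc 0 r) hcont.continuousOn
    intro t ht
    rw [interior_Icc] at ht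
    rw [(hderiv t ht.1).deriv]
    have h5 : t ^ (γ - q) < α / β := by
      rw [← hrpow]; exact Real.rpow_lt_rpow ht.1.le ht.2 hγq
    have h6 : β * t ^ (γ - q) - α < 0 := by
      have h7 := mul_lt_mul_of_pos_left h5 hβ
      have h8 : β * (α / β) = α := by field_simp
      linarith
    exact mul_neg_of_pos_of_neg (rpow_pos_of_pos ht.1 _) h6
  have hmono : StrictMonoOn f (Set.Ici r) := by
    apply strictMonoOn_of_deriv_pos (convex_Ici r) hcont.continuousOn
    intro t ht
    rw [interior_Ici] at ht
    have ht0 : 0 < t := lt_trans hr ht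
    rw [(hderiv t ht0).deriv]
    have h5 : α / β < t ^ (γ - q) := by
      rw [← hrpow]; exact Real.rpow_lt_rpow hr.le ht hγq
    have h6 : 0 < β * t ^ (γ - q) - α := by
      have h7 := mul_lt_mul_of_pos_left h5 hβ
      have h8 : β * (α / β) = α := by field_simp
      linarith
    exact mul_pos (rpow_pos_of_pos ht0 _) h6
  rcases lt_or_gt_of_ne hne with h | h
  · exact hanti ⟨hs, h.le⟩ ⟨hr.le, le_rfl⟩ h
  · exact hmono (Set.self_mem_Ici) h.le h

open Real

theorem stmt_8 (q γ σa σb ahat bhat : ℝ) (hq : 1 < q) (hqγ : q < γ)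
    (hσa : 0 < σa) (ha : σa ≤ ahat) (hσb : 0 < σb) (hb : σb ≤ bhat)
    (j : ℝ → ℝ → ℝ → ℝ)
    (hj : ∀ α β s, j α β s = -(α / q) * s ^ q + (β / γ) * s ^ γ)
    (ρ : ℝ → ℝ → ℝ) (hρ : ∀ α β, ρ α β = (α / β) ^ (1 / (γ - q)))
    (η : ℝ) (hη : 0 < η) :
    ∃ κ : ℝ, 0 < κ ∧
      ∀ α β s : ℝ, α ∈ Set.Icc σa ahat → β ∈ Set.Icc σb bhat →
        0 ≤ s → η ≤ |s - ρ α β| →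
          κ ≤ j α β s - j α β (ρ α β) := by
  have hq0 : (0:ℝ) < q := by linarith
  have hγ0 : (0:ℝ) < γ := by linarith
  have hγq : (0:ℝ) < γ - q := by linarith
  have hahat : (0:ℝ) < ahat := lt_of_lt_of_le hσa ha
  have hbhat : (0:ℝ) < bhat := lt_of_lt_of_le hσb hb
  set c : ℝ := 1 / (γ - q) with hcdef
  set R : ℝ := (ahat / σb) ^ c with hRdef
  set C1 : ℝ := 1 + (bhat / γ) * R ^ γ with hC1def
  set T : ℝ := (ahat / q + C1) * γ / σb with hTdef
  set M : ℝ := max 1 (T ^ c) with hMdef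
  clear_value c R C1 T M
  have hc : (0:ℝ) < c := by rw [hcdef]; positivity
  have hR : 0 < R := by rw [hRdef]; exact rpow_pos_of_pos (div_pos hahat hσb) _
  have hρpos : ∀ α β : ℝ, α ∈ Set.Icc σa ahat → β ∈ Set.Icc σb bhat → 0 < ρ α β := by
    intro α β hα hβ
    rw [hρ]
    exact rpow_pos_of_pos (div_pos (lt_of_lt_of_le hσa hα.1) (lt_of_lt_of_le hσb hβ.1)) _
  have hρR : ∀ α β : ℝ, α ∈ Set.Icc σa ahat → β ∈ Set.Icc σb bhat → ρ α β ≤ R := by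
    intro α β hα hβ
    rw [hρ, hRdef]
    apply Real.rpow_le_rpow (le_of_lt (div_pos (lt_of_lt_of_le hσa hα.1) (lt_of_lt_of_le hσb hβ.1)))
      _ hc.le
    have hβ0 : 0 < β := lt_of_lt_of_le hσb hβ.1
    calc α / β ≤ ahat / β := by gcongr; exact hα.2
      _ ≤ ahat / σb := by gcongr; exact hβ.1
  have hC1 : 0 < C1 := by
    rw [hC1def]
    have h0 : 0 < R ^ γ := rpow_pos_of_pos hR _
    have h0' : 0 < (bhat / γ) * R ^ γ := mul_pos (div_pos hbhat hγ0) h0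
    linarith
  have hT : 0 < T := by
    rw [hTdef]
    exact div_pos (mul_pos (add_pos (div_pos hahat hq0) hC1) hγ0) hσb
  have hM1 : (1:ℝ) ≤ M := by rw [hMdef]; exact le_max_left _ _
  -- large s estimate
  have hlarge : ∀ α β s : ℝ, α ∈ Set.Icc σa ahat → β ∈ Set.Icc σb bhat →
      M ≤ s → 1 ≤ j α β s - j α β (ρ α β) := by
    intro α β s hα hβ hsM
    have hs1 : (1:ℝ) ≤ s := le_trans hM1 hsM
    have hs0 : (0:ℝ) < s := by linarith
    have hTc : T ^ c ≤ s := by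
      rw [hMdef] at hsM
      exact le_trans (le_max_right _ _) hsM
    have h1 : T ≤ s ^ (γ - q) := by
      have h2 := Real.rpow_le_rpow (rpow_pos_of_pos hT c).le hTc hγq.le
      rwa [← Real.rpow_mul hT.le, hcdef, one_div_mul_cancel hγq.ne', rpow_one] at h2
    have hsplit : s ^ γ = s ^ q * s ^ (γ - q) := by
      rw [← Real.rpow_add hs0]; ring_nf
    have hsq1 : (1:ℝ) ≤ s ^ q := by
      calc (1:ℝ) = 1 ^ q := (Real.one_rpow q).symm
        _ ≤ s ^ q := Real.rpow_le_rpow zero_le_one hs1 hq0.le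
    have hsqpos : (0:ℝ) < s ^ q := by linarith
    have e1 : (σb / γ) * T = ahat / q + C1 := by
      rw [hTdef]; field_simp
    have h1' : ahat / q + C1 ≤ (σb / γ) * s ^ (γ - q) := by
      rw [← e1]
      exact mul_le_mul_of_nonneg_left h1 (by positivity)
    have k1 : (ahat / q + C1) * s ^ q ≤ (β / γ) * s ^ γ := by
      rw [hsplit]
      calc (ahat / q + C1) * s ^ q ≤ ((σb / γ) * s ^ (γ - q)) * s ^ q :=
            mul_le_mul_of_nonneg_right h1' hsqpos.le
        _ ≤ ((β / γ) * s ^ (γ - q)) * s ^ q := by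
            have h5 : 0 < s ^ (γ - q) := rpow_pos_of_pos hs0 _
            have h6 : σb / γ ≤ β / γ := by gcongr; exact hβ.1
            exact mul_le_mul_of_nonneg_right (mul_le_mul_of_nonneg_right h6 h5.le) hsqpos.le
        _ = (β / γ) * (s ^ q * s ^ (γ - q)) := by ring
    have k2 : -(ahat / q) * s ^ q ≤ -(α / q) * s ^ q := by
      have h6 : α / q ≤ ahat / q := by gcongr; exact hα.2
      have := mul_le_mul_of_nonneg_right h6 hsqpos.le
      linarith
    have hjs : C1 ≤ j α β s := by
      rw [hj]
      have h9 : C1 * 1 ≤ C1 * s ^ q := mul_le_mul_of_nonneg_left hsq1 hC1.le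
      have h10 : (ahat / q + C1) * s ^ q = ahat / q * s ^ q + C1 * s ^ q := by ring
      nlinarith [k1, k2, h9, h10]
    have hjρ : j α β (ρ α β) ≤ (bhat / γ) * R ^ γ := by
      rw [hj]
      have hρ0 := hρpos α β hα hβ
      have h2 : -(α / q) * (ρ α β) ^ q ≤ 0 := by
        have h7 : 0 < (ρ α β) ^ q := rpow_pos_of_pos hρ0 _
        have hαq : 0 < α / q := div_pos (lt_of_lt_of_le hσa hα.1) hq0
        have := mul_pos hαq h7
        linarith
      have h3 : (β / γ) * (ρ α β) ^ γ ≤ (bhat / γ) * R ^ γ := by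
        have h4 : (ρ α β) ^ γ ≤ R ^ γ := Real.rpow_le_rpow hρ0.le (hρR α β hα hβ) hγ0.le
        have h5 : 0 < (ρ α β) ^ γ := rpow_pos_of_pos hρ0 _
        have h6 : β / γ ≤ bhat / γ := by gcongr; exact hβ.2
        have h8 : 0 ≤ bhat / γ := by positivity
        exact mul_le_mul h6 h4 h5.le h8
      linarith
    rw [hC1def] at hjs
    linarith
  -- continuity setup
  have hcontq : Continuous fun x : ℝ => x ^ q := by
    rw [continuous_iff_continuousAt]
    exact fun x => Real.continuousAt_rpow_const x q (Or.inr hq0.le)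
  have hcontγ : Continuous fun x : ℝ => x ^ γ := by
    rw [continuous_iff_continuousAt]
    exact fun x => Real.continuousAt_rpow_const x γ (Or.inr hγ0.le)
  set g : ℝ × ℝ → ℝ := fun ab => (ab.1 / max ab.2 σb) ^ c with hgdef
  have hgcont : Continuous g := by
    apply Continuous.rpow_const
    · exact continuous_fst.div (continuous_snd.max continuous_const)
        (fun x => ne_of_gt (lt_of_lt_of_le hσb (le_max_right _ _)))
    · exact fun x => Or.inr hc.le
  have hgρ : ∀ α β : ℝ, σb ≤ β → g (α, β) = ρ α β := by
    intro α β hβ'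
    rw [hgdef, hρ]
    simp [max_eq_left hβ']
  set F : (ℝ × ℝ) × ℝ → ℝ := fun p =>
    (-(p.1.1 / q) * p.2 ^ q + (p.1.2 / γ) * p.2 ^ γ) -
    (-(p.1.1 / q) * (g p.1) ^ q + (p.1.2 / γ) * (g p.1) ^ γ) with hFdef
  have hFcont : Continuous F := by
    apply Continuous.sub
    · exact ((continuous_fst.fst.div_const q).neg.mul (hcontq.comp continuous_snd)).add
        ((continuous_fst.snd.div_const γ).mul (hcontγ.comp continuous_snd))
    · exact ((continuous_fst.fst.div_const q).neg.mul
          (hcontq.comp (hgcont.comp continuous_fst))).add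
        ((continuous_fst.snd.div_const γ).mul (hcontγ.comp (hgcont.comp continuous_fst)))
  have hFj : ∀ α β s : ℝ, σb ≤ β → F ((α, β), s) = j α β s - j α β (ρ α β) := by
    intro α β s hβ'
    rw [hFdef]
    simp only [hj, hgρ α β hβ']
  set K : Set ((ℝ × ℝ) × ℝ) :=
    ((Set.Icc σa ahat ×ˢ Set.Icc σb bhat) ×ˢ Set.Icc 0 M) ∩
      {p | η ≤ |p.2 - g p.1|} with hKdef
  have hKcomp : IsCompact K := by
    apply IsCompact.inter_right ((isCompact_Icc.prod isCompact_Icc).prod isCompact_Icc)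
    exact isClosed_le continuous_const (continuous_snd.sub (hgcont.comp continuous_fst)).abs
  have hFpos : ∀ p ∈ K, 0 < F p := by
    rintro ⟨⟨α, β⟩, s⟩ ⟨⟨⟨hα, hβ⟩, hs, _⟩, hsep⟩
    have hβ' : σb ≤ β := hβ.1
    rw [hFj α β s hβ']
    have hne : s ≠ ρ α β := by
      intro hcon
      simp only [Set.mem_setOf_eq] at hsep
      rw [hgρ α β hβ', hcon, sub_self, abs_zero] at hsep
      linarith
    have hα0 : 0 < α := lt_of_lt_of_le hσa hα.1
    have hβ0 : 0 < β := lt_of_lt_of_le hσb hβ.1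
    rw [hρ α β, hcdef] at hne
    have hkey := jmin_aux q γ α β hq hqγ hα0 hβ0 s hs hne
    rw [hj, hj, hρ, hcdef]
    linarith
  by_cases hKne : K.Nonempty
  · obtain ⟨p0, hp0, hmin⟩ := hKcomp.exists_isMinOn hKne hFcont.continuousOn
    refine ⟨min 1 (F p0), lt_min one_pos (hFpos p0 hp0), ?_⟩
    intro α β s hα hβ hs hsep
    rcases le_or_gt s M with hsM | hsM
    · have hmem : ((α, β), s) ∈ K := by
        constructor
        · exact ⟨⟨hα, hβ⟩, hs, hsM⟩
        · simp only [Set.mem_setOf_eq]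
          rwa [hgρ α β hβ.1]
      have h1 := isMinOn_iff.mp hmin _ hmem
      rw [hFj α β s hβ.1] at h1
      exact le_trans (min_le_right _ _) h1
    · exact le_trans (min_le_left _ _) (hlarge α β s hα hβ hsM.le)
  · refine ⟨1, one_pos, ?_⟩
    intro α β s hα hβ hs hsep
    rcases le_or_gt s M with hsM | hsM
    · exfalso
      apply hKne
      refine ⟨((α, β), s), ⟨⟨hα, hβ⟩, hs, hsM⟩, ?_⟩
      simp only [Set.mem_setOf_eq]
      rwa [hgρ α β hβ.1]
    · exact hlarge α β s hα hβ hsM.le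
end
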